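/- For every hyperbolic matrix M ∈ Sp(2n,ℤ) (and in fact every M ∈ Sp(2n,ℤ)), there exists a unique vector φ_M ∈ {0,1}^{2n} such that Q(M⁻¹w) − Q(w) ≡ σ(φ_M, w) (mod 2ℤ) for all w ∈ ℤ^{2n}. -/

import Mathlib

open Matrix BigOperators

/-- The standard symplectic bilinear form `σ((q,p),(q',p')) = ⟨p,q'⟩ − ⟨p',q⟩` on `ℤ^{2n}`,
where a vector `x : Fin n ⊕ Fin n → ℤ` has `q`-coordinates `x (Sum.inl i)` and
`p`-coordinates `x (Sum.inr i)`. -/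
def sigmaZ (n : ℕ) (x y : Fin n ⊕ Fin n → ℤ) : ℤ :=
  (∑ i : Fin n, x (Sum.inr i) * y (Sum.inl i)) - ∑ i : Fin n, y (Sum.inr i) * x (Sum.inl i)

/-- `Q((q,p)) = ⟨q,p⟩`. -/
def QZ (n : ℕ) (x : Fin n ⊕ Fin n → ℤ) : ℤ :=
  ∑ i : Fin n, x (Sum.inl i) * x (Sum.inr i)

/-- An integer `2n × 2n` matrix is symplectic if it preserves the standard symplectic
bilinear form (equivalently, its real extension preserves `σ` on all of `ℝ^{2n}`). -/
def IsSymplecticZ (n : ℕ) (M : Matrix (Fin n ⊕ Fin n) (Fin n ⊕ Fin n) ℤ) : Prop :=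
  ∀ x y : Fin n ⊕ Fin n → ℤ, sigmaZ n (M.mulVec x) (M.mulVec y) = sigmaZ n x y

/-- standard basis vector -/
def eZ (n : ℕ) (j : Fin n ⊕ Fin n) : Fin n ⊕ Fin n → ℤ := Pi.single j 1

lemma sigmaZ_e_inl (n : ℕ) (ψ : Fin n ⊕ Fin n → ℤ) (i : Fin n) :
    sigmaZ n ψ (eZ n (Sum.inl i)) = ψ (Sum.inr i) := by
  simp [sigmaZ, eZ, Pi.single_apply]

lemma sigmaZ_e_inr (n : ℕ) (ψ : Fin n ⊕ Fin n → ℤ) (i : Fin n) :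
    sigmaZ n ψ (eZ n (Sum.inr i)) = -ψ (Sum.inl i) := by
  simp [sigmaZ, eZ, Pi.single_apply]

lemma QZ_add (n : ℕ) (u v : Fin n ⊕ Fin n → ℤ) :
    QZ n (u + v) - QZ n u - QZ n v
      = sigmaZ n u v + 2 * ∑ i : Fin n, u (Sum.inl i) * v (Sum.inr i) := by
  simp only [QZ, sigmaZ, Pi.add_apply, Finset.mul_sum, ← Finset.sum_sub_distrib,
    ← Finset.sum_add_distrib]
  apply Finset.sum_congr rfl
  intros; ring

theorem exists_unique_phi (n : ℕ) (M Minv : Matrix (Fin n ⊕ Fin n) (Fin n ⊕ Fin n) ℤ)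
    (hM : IsSymplecticZ n M) (hMinv₁ : M * Minv = 1) (hMinv₂ : Minv * M = 1) :
    ∃! φ : Fin n ⊕ Fin n → ℤ, (∀ i, φ i = 0 ∨ φ i = 1) ∧
      ∀ w : Fin n ⊕ Fin n → ℤ,
        (2 : ℤ) ∣ (QZ n (Minv.mulVec w) - QZ n w - sigmaZ n φ w) := by
  -- the defect function
  set f : (Fin n ⊕ Fin n → ℤ) → ℤ := fun w => QZ n (Minv.mulVec w) - QZ n w with hf
  have hMM : ∀ x, M.mulVec (Minv.mulVec x) = x := by
    intro x; rw [mulVec_mulVec, hMinv₁, one_mulVec]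
  have hsig_inv : ∀ x y, sigmaZ n (Minv.mulVec x) (Minv.mulVec y) = sigmaZ n x y := by
    intro x y
    have := hM (Minv.mulVec x) (Minv.mulVec y)
    rw [hMM, hMM] at this
    exact this.symm
  -- F is f mod 2
  set F : (Fin n ⊕ Fin n → ℤ) → ZMod 2 := fun w => ((f w : ℤ) : ZMod 2) with hF
  have hdvd : ∀ a : ℤ, (2 : ℤ) ∣ a ↔ ((a : ZMod 2) = 0) := by
    intro a
    rw [ZMod.intCast_zmod_eq_zero_iff_dvd a 2]
    norm_num
  have hFadd : ∀ x y, F (x + y) = F x + F y := by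
    intro x y
    have key : (2 : ℤ) ∣ (f (x + y) - f x - f y) := by
      have h1 : f (x + y) - f x - f y
          = (QZ n (Minv.mulVec x + Minv.mulVec y) - QZ n (Minv.mulVec x) - QZ n (Minv.mulVec y))
            - (QZ n (x + y) - QZ n x - QZ n y) := by
        simp only [hf, mulVec_add]; ring
      rw [h1, QZ_add, QZ_add, hsig_inv]
      exact ⟨(∑ i : Fin n, (Minv.mulVec x) (Sum.inl i) * (Minv.mulVec y) (Sum.inr i))
        - ∑ i : Fin n, x (Sum.inl i) * y (Sum.inr i), by ring⟩
    have := (hdvd _).mp key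
    push_cast at this
    simp only [hF]
    linear_combination this
  have hFsmul : ∀ (c : ℤ) x, F (c • x) = (c : ZMod 2) * F x := by
    intro c x
    have hQ : ∀ y : Fin n ⊕ Fin n → ℤ, QZ n (c • y) = c ^ 2 * QZ n y := by
      intro y
      simp only [QZ, Pi.smul_apply, smul_eq_mul, Finset.mul_sum]
      apply Finset.sum_congr rfl; intros; ring
    have key : (2 : ℤ) ∣ (f (c • x) - c * f x) := by
      have h1 : f (c • x) = c ^ 2 * f x := by
        simp only [hf, mulVec_smul, hQ]; ring
      rw [h1]
      have : c ^ 2 * f x - c * f x = (c * (c - 1)) * f x := by ring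
      rw [this]
      exact Dvd.dvd.mul_right (Int.even_mul_pred_self c).two_dvd _
    have := (hdvd _).mp key
    push_cast at this
    simp only [hF]
    linear_combination this
  have hF0 : F 0 = 0 := by
    simp only [hF, hf, mulVec_zero, QZ]
    norm_num
  -- linearity over sums
  have hFsum : ∀ (s : Finset (Fin n ⊕ Fin n)) (w : Fin n ⊕ Fin n → ℤ),
      F (∑ j ∈ s, w j • eZ n j) = ∑ j ∈ s, (w j : ZMod 2) * F (eZ n j) := by
    intro s w
    induction s using Finset.induction_on with
    | empty => simpa using hF0
    | insert _ _ hj ih =>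
      rw [Finset.sum_insert hj, Finset.sum_insert hj, hFadd, hFsmul, ih]
  have hFw : ∀ w : Fin n ⊕ Fin n → ℤ,
      F w = ∑ j : Fin n ⊕ Fin n, (w j : ZMod 2) * F (eZ n j) := by
    intro w
    rw [← hFsum]
    congr 1
    ext j
    simp [eZ, Pi.single_apply, Finset.sum_ite_eq']
  -- the candidate
  set φ0 : Fin n ⊕ Fin n → ℤ :=
    Sum.elim (fun i => f (eZ n (Sum.inr i)) % 2) (fun i => f (eZ n (Sum.inl i)) % 2) with hφ0
  have hφ0cast : ∀ i : Fin n, ((φ0 (Sum.inl i) : ZMod 2) = F (eZ n (Sum.inr i)))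
      ∧ ((φ0 (Sum.inr i) : ZMod 2) = F (eZ n (Sum.inl i))) := by
    intro i
    constructor
    · simpa [hφ0, hF] using ZMod.intCast_mod (f (eZ n (Sum.inr i))) 2
    · simpa [hφ0, hF] using ZMod.intCast_mod (f (eZ n (Sum.inl i))) 2
  have hσcast : ∀ w, ((sigmaZ n φ0 w : ℤ) : ZMod 2) = F w := by
    intro w
    rw [hFw w, Fintype.sum_sum_type]
    simp only [sigmaZ]
    push_cast
    have hneg : ∀ a : ZMod 2, -a = a := by decide
    rw [sub_eq_add_neg, ← Finset.sum_neg_distrib]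
    congr 1
    · apply Finset.sum_congr rfl
      intro i _
      rw [(hφ0cast i).2]; ring
    · apply Finset.sum_congr rfl
      intro i _
      rw [← hneg ((w (Sum.inr i) : ZMod 2) * _), (hφ0cast i).1]; ring
  refine ⟨φ0, ⟨?_, ?_⟩, ?_⟩
  · intro j
    cases j <;> · simp only [hφ0, Sum.elim_inl, Sum.elim_inr]; omega
  · intro w
    rw [hdvd]
    push_cast
    rw [hσcast w]
    simp only [hF, hf]
    push_cast
    ring
  · -- uniqueness
    intro ψ ⟨hψ01, hψ⟩
    funext j
    have key : (2 : ℤ) ∣ (sigmaZ n ψ (eZ n j) - sigmaZ n φ0 (eZ n j)) := by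
      have h1 := hψ (eZ n j)
      have h2 : (2 : ℤ) ∣ (f (eZ n j) - sigmaZ n φ0 (eZ n j)) := by
        rw [hdvd]
        push_cast
        rw [hσcast (eZ n j)]
        simp only [hF, hf]
        push_cast
        ring
      have : sigmaZ n ψ (eZ n j) - sigmaZ n φ0 (eZ n j)
          = (f (eZ n j) - sigmaZ n φ0 (eZ n j))
            - (QZ n (Minv.mulVec (eZ n j)) - QZ n (eZ n j) - sigmaZ n ψ (eZ n j)) := by
        simp only [hf]; ring
      rw [this]
      exact dvd_sub h2 h1
    have h01ψ := hψ01 j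
    have h01φ : φ0 j = 0 ∨ φ0 j = 1 := by
      cases j <;> · simp only [hφ0, Sum.elim_inl, Sum.elim_inr]; omega
    cases j with
    | inl i =>
      -- use w = e (inr i): sigma ψ w = -ψ(inl i)
      have key2 : (2 : ℤ) ∣ (sigmaZ n ψ (eZ n (Sum.inr i)) - sigmaZ n φ0 (eZ n (Sum.inr i))) := by
        have h1 := hψ (eZ n (Sum.inr i))
        have h2 : (2 : ℤ) ∣ (f (eZ n (Sum.inr i)) - sigmaZ n φ0 (eZ n (Sum.inr i))) := by
          rw [hdvd]
          push_cast
          rw [hσcast (eZ n (Sum.inr i))]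
          simp only [hF, hf]
          push_cast
          ring
        have : sigmaZ n ψ (eZ n (Sum.inr i)) - sigmaZ n φ0 (eZ n (Sum.inr i))
            = (f (eZ n (Sum.inr i)) - sigmaZ n φ0 (eZ n (Sum.inr i)))
              - (QZ n (Minv.mulVec (eZ n (Sum.inr i))) - QZ n (eZ n (Sum.inr i))
                - sigmaZ n ψ (eZ n (Sum.inr i))) := by
          simp only [hf]; ring
        rw [this]
        exact dvd_sub h2 h1
      rw [sigmaZ_e_inr, sigmaZ_e_inr] at key2
      omega
    | inr i =>
      have key2 : (2 : ℤ) ∣ (sigmaZ n ψ (eZ n (Sum.inl i)) - sigmaZ n φ0 (eZ n (Sum.inl i))) := by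
        have h1 := hψ (eZ n (Sum.inl i))
        have h2 : (2 : ℤ) ∣ (f (eZ n (Sum.inl i)) - sigmaZ n φ0 (eZ n (Sum.inl i))) := by
          rw [hdvd]
          push_cast
          rw [hσcast (eZ n (Sum.inl i))]
          simp only [hF, hf]
          push_cast
          ring
        have : sigmaZ n ψ (eZ n (Sum.inl i)) - sigmaZ n φ0 (eZ n (Sum.inl i))
            = (f (eZ n (Sum.inl i)) - sigmaZ n φ0 (eZ n (Sum.inl i)))
              - (QZ n (Minv.mulVec (eZ n (Sum.inl i))) - QZ n (eZ n (Sum.inl i))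
                - sigmaZ n ψ (eZ n (Sum.inl i))) := by
          simp only [hf]; ring
        rw [this]
        exact dvd_sub h2 h1
      rw [sigmaZ_e_inl, sigmaZ_e_inl] at key2
      omega
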